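/- Suppose σ, τ : ℝ → ℂ are continuous with |σ(x)| ≤ A (1+|x|)^{-α} and |τ(x)| ≤ B (1+|x|)^{-(α+1/2)} for some 0 < α < 1/2, and suppose K : ℝ × ℝ → ℂ is measurable with |K(x,y)| ≤ C (|x|+|y|)^{-3/2} for |x|, |y| ≥ d > 0. Then for |x| ≥ d, |∫_{|y|≥d} K(x,y) τ(y) dy| ≤ M |x|^{-(α+1)} for a constant M depending only on A, B, C, d, α. -/

import Mathlib

open MeasureTheory Set Real

lemma integrableOn_Iic_of_neg {f : ℝ → ℝ} {c : ℝ}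
    (h : IntegrableOn (fun y => f (-y)) (Ici (-c))) : IntegrableOn f (Iic c) := by
  have A : MeasurableEmbedding (fun x : ℝ => -x) :=
    (Homeomorph.neg ℝ).isClosedEmbedding.measurableEmbedding
  have h2 : IntegrableOn f (Iic c) (Measure.map (fun x : ℝ => -x) volume) := by
    rw [A.integrableOn_map_iff]
    have hpre : ((fun x : ℝ => -x) ⁻¹' Iic c) = Ici (-c) := by
      ext y; simp [neg_le]
    rw [hpre]
    exact h
  rwa [Measure.map_neg_eq_self (volume : Measure ℝ)] at h2

lemma key (α d X : ℝ) (hα0 : 0 < α) (hα1 : α < 1/2) (hd : 0 < d) (hdX : d ≤ X) :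
    IntegrableOn (fun y => (X + |y|) ^ (-(3:ℝ)/2) * |y| ^ (-(α+1/2))) {y : ℝ | d ≤ |y|} ∧
    ∫ y in {y : ℝ | d ≤ |y|}, (X + |y|) ^ (-(3:ℝ)/2) * |y| ^ (-(α+1/2)) ≤
      (2/(1/2-α) + 2/(1+α)) * X ^ (-(α+1)) := by
  have hX : 0 < X := lt_of_lt_of_le hd hdX
  set f : ℝ → ℝ := fun y => (X + |y|) ^ (-(3:ℝ)/2) * |y| ^ (-(α+1/2)) with hf
  have hcont : ContinuousOn f {y : ℝ | d ≤ |y|} := by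
    apply ContinuousOn.mul
    · apply ContinuousOn.rpow_const ((continuous_const.add continuous_abs).continuousOn)
      intro y hy; left; exact ne_of_gt (add_pos_of_pos_of_nonneg hX (abs_nonneg y))
    · apply ContinuousOn.rpow_const continuous_abs.continuousOn
      intro y hy; left; exact ne_of_gt (lt_of_lt_of_le hd hy)
  have hdom : ∀ y : ℝ, d ≤ |y| → f y ≤ |y| ^ (-(2+α)) := by
    intro y hy
    have hy0 : 0 < |y| := lt_of_lt_of_le hd hy
    have h1 : (X + |y|) ^ (-(3:ℝ)/2) ≤ |y| ^ (-(3:ℝ)/2) :=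
      rpow_le_rpow_of_nonpos hy0 (by linarith) (by norm_num)
    calc f y ≤ |y| ^ (-(3:ℝ)/2) * |y| ^ (-(α+1/2)) :=
          mul_le_mul_of_nonneg_right h1 (rpow_nonneg hy0.le _)
      _ = |y| ^ (-(2+α)) := by
          rw [← rpow_add hy0]; ring_nf
  have hint_pow : IntegrableOn (fun y : ℝ => |y| ^ (-(2+α))) (Ioi d) := by
    refine (integrableOn_Ioi_rpow_of_lt (a := -(2+α)) (by linarith) hd).congr_fun
      (fun y hy => ?_) measurableSet_Ioi
    rw [abs_of_pos (lt_trans hd hy)]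
  have hIoi : IntegrableOn f (Ioi d) := by
    refine Integrable.mono' hint_pow ((hcont.mono ?_).aestronglyMeasurable measurableSet_Ioi) ?_
    · intro y hy
      exact le_trans (le_of_lt hy) (le_abs_self y)
    refine (ae_restrict_iff' measurableSet_Ioi).2 (Filter.Eventually.of_forall fun y hy => ?_)
    have hy' : d ≤ |y| := le_trans (le_of_lt hy) (le_abs_self y)
    rw [norm_of_nonneg (mul_nonneg (rpow_nonneg (by positivity) _) (rpow_nonneg (abs_nonneg y) _))]
    exact hdom y hy'
  have hIci : IntegrableOn f (Ici d) := (integrableOn_Ici_iff_integrableOn_Ioi enorm_ne_top).2 hIoi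
  have hIic : IntegrableOn f (Iic (-d)) := by
    apply integrableOn_Iic_of_neg
    have heq : (fun y => f (-y)) = f := by funext y; simp only [hf, abs_neg]
    rw [heq, neg_neg]
    exact hIci
  have hS : {y : ℝ | d ≤ |y|} = Iic (-d) ∪ Ici d := by
    ext y
    simp only [Set.mem_setOf_eq, Set.mem_union, Set.mem_Iic, Set.mem_Ici, le_abs, le_neg]
    tauto
  have hdisj : Disjoint (Iic (-d)) (Ici d) := Iic_disjoint_Ici.2 (by intro h; linarith)
  have hintS : IntegrableOn f {y : ℝ | d ≤ |y|} := by
    rw [hS]; exact hIic.union hIci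
  refine ⟨hintS, ?_⟩
  rw [hS, setIntegral_union hdisj measurableSet_Ici hIic hIci]
  have hneg : ∫ y in Iic (-d), f y = ∫ y in Ioi d, f y := by
    have h1 : ∫ y in Iic (-d), f y = ∫ y in Iic (-d), f (-y) := by
      simp only [hf, abs_neg]
    rw [h1, integral_comp_neg_Iic, neg_neg]
  have hIciIoi : ∫ y in Ici d, f y = ∫ y in Ioi d, f y := integral_Ici_eq_integral_Ioi
  rw [hneg, hIciIoi]
  have hsplit : Ioc d X ∪ Ioi X = Ioi d := Ioc_union_Ioi_eq_Ioi hdX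
  have hdisj2 : Disjoint (Ioc d X) (Ioi X) := by
    rw [Set.disjoint_left]; rintro y ⟨_, h1⟩ h2; exact absurd h1 (not_le.mpr h2)
  have hIoc : IntegrableOn f (Ioc d X) := hIoi.mono_set (fun y hy => hy.1)
  have hIoiX : IntegrableOn f (Ioi X) := hIoi.mono_set (Ioi_subset_Ioi hdX)
  have hintsplit : ∫ y in Ioi d, f y = (∫ y in Ioc d X, f y) + ∫ y in Ioi X, f y := by
    rw [← hsplit, setIntegral_union hdisj2 measurableSet_Ioi hIoc hIoiX]
  rw [hintsplit]
  have hb1 : ∫ y in Ioc d X, f y ≤ X ^ (-(α+1)) / (1/2 - α) := by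
    have hg : IntegrableOn (fun y : ℝ => X ^ (-(3:ℝ)/2) * y ^ (-(α+1/2))) (Ioc d X) := by
      refine ((?_ : ContinuousOn _ (Icc d X)).integrableOn_Icc).mono_set Ioc_subset_Icc_self
      exact continuousOn_const.mul (continuousOn_id.rpow_const fun y hy =>
        Or.inl (ne_of_gt (lt_of_lt_of_le hd hy.1)))
    have hle : ∀ y ∈ Ioc d X, f y ≤ X ^ (-(3:ℝ)/2) * y ^ (-(α+1/2)) := by
      intro y hy
      have hy0 : 0 < y := lt_trans hd hy.1
      rw [hf]
      simp only
      rw [abs_of_pos hy0]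
      refine mul_le_mul_of_nonneg_right ?_ (rpow_nonneg hy0.le _)
      exact rpow_le_rpow_of_nonpos hX (by linarith) (by norm_num)
    refine le_trans (setIntegral_mono_on hIoc hg measurableSet_Ioc hle) ?_
    have hval : ∫ y in Ioc d X, X ^ (-(3:ℝ)/2) * y ^ (-(α+1/2)) =
        X ^ (-(3:ℝ)/2) * ((X ^ (1/2 - α) - d ^ (1/2 - α)) / (1/2 - α)) := by
      rw [← intervalIntegral.integral_of_le hdX, intervalIntegral.integral_const_mul,
        integral_rpow (Or.inl (by linarith)),
        show -(α+1/2) + 1 = 1/2 - α by ring]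
    rw [hval]
    have hpos : (0:ℝ) < 1/2 - α := by linarith
    have hstep : X ^ (-(3:ℝ)/2) * ((X ^ (1/2 - α) - d ^ (1/2 - α)) / (1/2 - α)) ≤
        X ^ (-(3:ℝ)/2) * (X ^ (1/2 - α) / (1/2 - α)) := by
      have hnum : X ^ (1/2 - α) - d ^ (1/2 - α) ≤ X ^ (1/2 - α) := by
        have := rpow_nonneg hd.le (1/2 - α); linarith
      gcongr
    refine le_trans hstep (le_of_eq ?_)
    rw [← mul_div_assoc, ← rpow_add hX, show -(3:ℝ)/2 + (1/2 - α) = -(α+1) by ring]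
  have hb2 : ∫ y in Ioi X, f y ≤ X ^ (-(α+1)) / (1 + α) := by
    have hg : IntegrableOn (fun y : ℝ => y ^ (-(2+α))) (Ioi X) :=
      integrableOn_Ioi_rpow_of_lt (by linarith) hX
    have hle : ∀ y ∈ Ioi X, f y ≤ y ^ (-(2+α)) := by
      intro y hy
      have hy0 : 0 < y := lt_trans hX hy
      have h := hdom y (by rw [abs_of_pos hy0]; linarith [mem_Ioi.1 hy])
      rwa [abs_of_pos hy0] at h
    refine le_trans (setIntegral_mono_on hIoiX hg measurableSet_Ioi hle) ?_
    rw [integral_Ioi_rpow_of_lt (by linarith) hX, show -(2+α) + 1 = -(α+1) by ring]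
    rw [show -X ^ (-(α+1)) / -(α+1) = X ^ (-(α+1)) / (1+α) by rw [neg_div_neg_eq]; ring_nf]
  have hring : (2/(1/2-α) + 2/(1+α)) * X ^ (-(α+1)) =
      2 * (X ^ (-(α+1)) / (1/2-α)) + 2 * (X ^ (-(α+1)) / (1+α)) := by ring
  rw [hring]
  linarith [hb1, hb2]

theorem stmt_18 (α d A B C : ℝ) (hα0 : 0 < α) (hα1 : α < 1/2) (hd : 0 < d) :
    ∃ M : ℝ, ∀ (σ τ : ℝ → ℂ) (K : ℝ → ℝ → ℂ),
      Continuous σ → Continuous τ →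
      Measurable (fun p : ℝ × ℝ => K p.1 p.2) →
      (∀ x : ℝ, ‖σ x‖ ≤ A * (1 + |x|) ^ (-α)) →
      (∀ x : ℝ, ‖τ x‖ ≤ B * (1 + |x|) ^ (-(α + 1/2))) →
      (∀ x y : ℝ, d ≤ |x| → d ≤ |y| → ‖K x y‖ ≤ C * (|x| + |y|) ^ (-(3:ℝ)/2)) →
      ∀ x : ℝ, d ≤ |x| →
        ‖∫ y in {y : ℝ | d ≤ |y|}, K x y * τ y‖ ≤ M * |x| ^ (-(α + 1)) := by
  refine ⟨B * C * (2/(1/2-α) + 2/(1+α)), ?_⟩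
  intro σ τ K hσc hτc hKm hσ hτ hK x hx
  have hX : 0 < |x| := lt_of_lt_of_le hd hx
  obtain ⟨hint, hbound⟩ := key α d |x| hα0 hα1 hd hx
  have hB : 0 ≤ B := by
    have h := hτ 0
    simp only [abs_zero, add_zero, Real.one_rpow, mul_one] at h
    exact le_trans (norm_nonneg _) h
  have hC : 0 ≤ C := by
    have hdd : d ≤ |d| := le_of_eq (abs_of_pos hd).symm
    have h := le_trans (norm_nonneg _) (hK d d hdd hdd)
    have hp : (0:ℝ) < (|d| + |d|) ^ (-(3:ℝ)/2) := by
      apply Real.rpow_pos_of_pos; rw [abs_of_pos hd]; linarith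
    exact (mul_nonneg_iff_of_pos_right hp).mp h
  have hSmeas : MeasurableSet {y : ℝ | d ≤ |y|} :=
    (isClosed_le continuous_const continuous_abs).measurableSet
  set f : ℝ → ℝ := fun y => (|x| + |y|) ^ (-(3:ℝ)/2) * |y| ^ (-(α+1/2)) with hf
  have hg : Integrable (fun y => B * C * f y)
      (volume.restrict {y : ℝ | d ≤ |y|}) := hint.const_mul (B * C)
  have hae : ∀ᵐ y ∂(volume.restrict {y : ℝ | d ≤ |y|}),
      ‖K x y * τ y‖ ≤ B * C * f y := by
    refine (ae_restrict_iff' hSmeas).2 (Filter.Eventually.of_forall fun y hy => ?_)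
    have hy0 : 0 < |y| := lt_of_lt_of_le hd hy
    have hτ' : ‖τ y‖ ≤ B * |y| ^ (-(α+1/2)) := by
      refine le_trans (hτ y) (mul_le_mul_of_nonneg_left ?_ hB)
      exact Real.rpow_le_rpow_of_nonpos hy0 (by linarith [abs_nonneg y]) (by linarith)
    calc ‖K x y * τ y‖ = ‖K x y‖ * ‖τ y‖ := norm_mul _ _
      _ ≤ (C * (|x| + |y|) ^ (-(3:ℝ)/2)) * (B * |y| ^ (-(α+1/2))) := by
          refine mul_le_mul (hK x y hx hy) hτ' (norm_nonneg _) ?_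
          positivity
      _ = B * C * f y := by rw [hf]; ring
  have hnorm := norm_integral_le_of_norm_le hg hae
  refine le_trans hnorm ?_
  rw [integral_const_mul]
  have heq : B * C * (2/(1/2-α) + 2/(1+α)) * |x| ^ (-(α+1)) =
      B * C * ((2/(1/2-α) + 2/(1+α)) * |x| ^ (-(α+1))) := by ring
  rw [heq]
  exact mul_le_mul_of_nonneg_left hbound (mul_nonneg hB hC)
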